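/- Let v ≥ 2 be an integer and define f(x) = log₂((v−x)^(v−x)/((v−1−x)^(v−1−x) · x^x)) + log₂((v−1)^(v−1)/((v−2+x)^(v−2+x) · (1−x)^(2(1−x)))) for 0 < x < 1. Then f attains its maximum on (0,1) at ξ = (1 + v − √(v² + 2v − 3))/2, and ξ < 1. -/

import Mathlib

open Real Set

/-- The function `f_{3,v}(1, x)` from the strength-3 bound, using real powers. -/
noncomputable def f3 (v : ℕ) (x : ℝ) : ℝ :=
  Real.logb 2 (((v : ℝ) - x) ^ (((v : ℝ) - x)) /
      ((((v : ℝ) - 1 - x) ^ (((v : ℝ) - 1 - x))) * x ^ x)) +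
  Real.logb 2 (((v : ℝ) - 1) ^ (((v : ℝ) - 1)) /
      ((((v : ℝ) - 2 + x) ^ (((v : ℝ) - 2 + x))) * (1 - x) ^ (2 * (1 - x))))

/-- `ln 2 · f3 v x`, written with `log`. -/
noncomputable def g3 (v : ℕ) (x : ℝ) : ℝ :=
  ((v : ℝ) - x) * Real.log ((v : ℝ) - x)
    - ((v : ℝ) - 1 - x) * Real.log ((v : ℝ) - 1 - x)
    - x * Real.log x
    + ((v : ℝ) - 1) * Real.log ((v : ℝ) - 1)
    - ((v : ℝ) - 2 + x) * Real.log ((v : ℝ) - 2 + x)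
    - 2 * (1 - x) * Real.log (1 - x)

lemma f3_eq_g3 (v : ℕ) (hv : (2:ℝ) ≤ (v:ℝ)) {x : ℝ} (hx : x ∈ Set.Ioo (0:ℝ) 1) :
    f3 v x = g3 v x / Real.log 2 := by
  obtain ⟨hx0, hx1⟩ := hx
  have h1 : 0 < (v:ℝ) - x := by linarith
  have h2 : 0 < (v:ℝ) - 1 - x := by linarith
  have h4 : 0 < (v:ℝ) - 1 := by linarith
  have h5 : 0 < (v:ℝ) - 2 + x := by linarith
  have h6 : 0 < 1 - x := by linarith
  have p1 := Real.rpow_pos_of_pos h1 ((v:ℝ) - x)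
  have p2 := Real.rpow_pos_of_pos h2 ((v:ℝ) - 1 - x)
  have p3 := Real.rpow_pos_of_pos hx0 x
  have p5 := Real.rpow_pos_of_pos h5 ((v:ℝ) - 2 + x)
  have p6 := Real.rpow_pos_of_pos h6 (2 * (1 - x))
  unfold f3 g3
  rw [Real.logb, Real.logb, Real.log_div p1.ne' (mul_pos p2 p3).ne',
    Real.log_div (Real.rpow_pos_of_pos h4 _).ne' (mul_pos p5 p6).ne',
    Real.log_mul p2.ne' p3.ne', Real.log_mul p5.ne' p6.ne',
    Real.log_rpow h1, Real.log_rpow h2, Real.log_rpow hx0, Real.log_rpow h4,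
    Real.log_rpow h5, Real.log_rpow h6]
  ring

lemma g3_hasDerivAt (v : ℕ) (hv : (2:ℝ) ≤ (v:ℝ)) {x : ℝ} (hx : x ∈ Set.Ioo (0:ℝ) 1) :
    HasDerivAt (g3 v)
      (Real.log ((v:ℝ) - 1 - x) + 2 * Real.log (1 - x)
        - Real.log ((v:ℝ) - x) - Real.log x - Real.log ((v:ℝ) - 2 + x)) x := by
  obtain ⟨hx0, hx1⟩ := hx
  have h1 : ((v:ℝ) - x) ≠ 0 := by intro h; linarith [h]
  have h2 : ((v:ℝ) - 1 - x) ≠ 0 := by intro h; linarith [h]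
  have h5 : ((v:ℝ) - 2 + x) ≠ 0 := by intro h; linarith [h]
  have h6 : (1 - x) ≠ 0 := by intro h; linarith [h]
  have d1 : HasDerivAt (fun t : ℝ => ((v:ℝ) - t) * Real.log ((v:ℝ) - t))
      ((Real.log ((v:ℝ) - x) + 1) * (-1)) x :=
    (Real.hasDerivAt_mul_log h1).comp x ((hasDerivAt_id x).const_sub ((v:ℝ)))
  have d2 : HasDerivAt (fun t : ℝ => ((v:ℝ) - 1 - t) * Real.log ((v:ℝ) - 1 - t))
      ((Real.log ((v:ℝ) - 1 - x) + 1) * (-1)) x :=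
    (Real.hasDerivAt_mul_log h2).comp x ((hasDerivAt_id x).const_sub ((v:ℝ) - 1))
  have d3 : HasDerivAt (fun t : ℝ => t * Real.log t) (Real.log x + 1) x :=
    Real.hasDerivAt_mul_log hx0.ne'
  have d5 : HasDerivAt (fun t : ℝ => ((v:ℝ) - 2 + t) * Real.log ((v:ℝ) - 2 + t))
      ((Real.log ((v:ℝ) - 2 + x) + 1) * 1) x :=
    (Real.hasDerivAt_mul_log h5).comp x ((hasDerivAt_id x).const_add ((v:ℝ) - 2))
  have d6 : HasDerivAt (fun t : ℝ => (1 - t) * Real.log (1 - t))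
      ((Real.log (1 - x) + 1) * (-1)) x :=
    (Real.hasDerivAt_mul_log h6).comp x ((hasDerivAt_id x).const_sub 1)
  have Hbig := ((((d1.sub d2).sub d3).add_const (((v:ℝ) - 1) * Real.log ((v:ℝ) - 1))).sub
      d5).sub (d6.const_mul 2)
  have hfun : g3 v = (fun t : ℝ =>
      ((v:ℝ) - t) * Real.log ((v:ℝ) - t) - ((v:ℝ) - 1 - t) * Real.log ((v:ℝ) - 1 - t)
        - t * Real.log t + ((v:ℝ) - 1) * Real.log ((v:ℝ) - 1)
        - ((v:ℝ) - 2 + t) * Real.log ((v:ℝ) - 2 + t)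
        - 2 * ((1 - t) * Real.log (1 - t))) := by
    funext t; unfold g3; ring
  rw [hfun]
  exact Hbig.congr_deriv (by ring)

theorem f3_max_at_xi (v : ℕ) (hv : 2 ≤ v) :
    (1 + (v : ℝ) - Real.sqrt ((v : ℝ) ^ 2 + 2 * (v : ℝ) - 3)) / 2 < 1 ∧
    deriv (f3 v) ((1 + (v : ℝ) - Real.sqrt ((v : ℝ) ^ 2 + 2 * (v : ℝ) - 3)) / 2) = 0 ∧
    ∀ x ∈ Set.Ioo (0 : ℝ) 1,
      f3 v x ≤ f3 v ((1 + (v : ℝ) - Real.sqrt ((v : ℝ) ^ 2 + 2 * (v : ℝ) - 3)) / 2) := by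
  have hV : (2:ℝ) ≤ (v:ℝ) := by exact_mod_cast hv
  set s : ℝ := Real.sqrt ((v : ℝ) ^ 2 + 2 * (v : ℝ) - 3) with hs
  set ξ : ℝ := (1 + (v : ℝ) - s) / 2 with hξ
  have hs2 : s ^ 2 = (v : ℝ) ^ 2 + 2 * (v : ℝ) - 3 := Real.sq_sqrt (by nlinarith)
  have hs_lt : s < (v : ℝ) + 1 := by
    rw [hs, Real.sqrt_lt' (by linarith)]; nlinarith
  have hs_gt : (v : ℝ) - 1 < s := by
    rw [hs, show ((v:ℝ) - 1 < Real.sqrt ((v : ℝ) ^ 2 + 2 * (v : ℝ) - 3)) ↔ _ from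
      Real.lt_sqrt (by linarith)]; nlinarith
  have hξ0 : 0 < ξ := by rw [hξ]; linarith
  have hξ1 : ξ < 1 := by rw [hξ]; linarith
  have hξmem : ξ ∈ Set.Ioo (0:ℝ) 1 := ⟨hξ0, hξ1⟩
  have hquad : ξ ^ 2 - ((v:ℝ) + 1) * ξ + 1 = 0 := by
    rw [hξ]; linear_combination (1/4 : ℝ) * hs2
  -- the sign of the derivative of g3
  have hderiv_eq : ∀ x ∈ Set.Ioo (0:ℝ) 1,
      Real.log ((v:ℝ) - 1 - x) + 2 * Real.log (1 - x)
        - Real.log ((v:ℝ) - x) - Real.log x - Real.log ((v:ℝ) - 2 + x)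
      = Real.log (((v:ℝ) - 1 - x) * (1 - x) ^ 2)
        - Real.log (((v:ℝ) - x) * (x * ((v:ℝ) - 2 + x))) := by
    intro x hx
    obtain ⟨hx0, hx1⟩ := hx
    have h1 : 0 < (v:ℝ) - x := by linarith
    have h2 : 0 < (v:ℝ) - 1 - x := by linarith
    have h5 : 0 < (v:ℝ) - 2 + x := by linarith
    have h6 : 0 < 1 - x := by linarith
    rw [Real.log_mul h2.ne' (pow_ne_zero 2 h6.ne'), Real.log_mul h1.ne' (mul_pos hx0 h5).ne',
      Real.log_mul hx0.ne' h5.ne', Real.log_pow]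
    push_cast; ring
  -- key factorization
  have hfact : ∀ x : ℝ, ((v:ℝ) - 1 - x) * (1 - x) ^ 2 - ((v:ℝ) - x) * (x * ((v:ℝ) - 2 + x))
      = ((v:ℝ) - 1) * (x ^ 2 - ((v:ℝ) + 1) * x + 1) := by
    intro x; ring
  have hlog2 : (0:ℝ) < Real.log 2 := Real.log_pos (by norm_num)
  -- derivative of g3 at ξ is zero
  have hgξ : Real.log ((v:ℝ) - 1 - ξ) + 2 * Real.log (1 - ξ)
      - Real.log ((v:ℝ) - ξ) - Real.log ξ - Real.log ((v:ℝ) - 2 + ξ) = 0 := by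
    rw [hderiv_eq ξ hξmem]
    have : ((v:ℝ) - 1 - ξ) * (1 - ξ) ^ 2 = ((v:ℝ) - ξ) * (ξ * ((v:ℝ) - 2 + ξ)) := by
      have := hfact ξ; rw [hquad] at this; linarith
    rw [this, sub_self]
  refine ⟨hξ1, ?_, ?_⟩
  · -- deriv f3 ξ = 0
    have hEq : f3 v =ᶠ[nhds ξ] fun x => g3 v x / Real.log 2 := by
      filter_upwards [isOpen_Ioo.mem_nhds hξmem] with x hx
      exact f3_eq_g3 v hV hx
    rw [hEq.deriv_eq]
    have := ((g3_hasDerivAt v hV hξmem).div_const (Real.log 2)).deriv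
    rw [this, hgξ, zero_div]
  · -- maximality
    intro x hx
    have key : g3 v x ≤ g3 v ξ := by
      rcases lt_trichotomy x ξ with hlt | heq | hgt
      · -- increasing on [x, ξ]
        have hsub : Set.Icc x ξ ⊆ Set.Ioo (0:ℝ) 1 := fun y hy =>
          ⟨lt_of_lt_of_le hx.1 hy.1, lt_of_le_of_lt hy.2 hξ1⟩
        have hmono : StrictMonoOn (g3 v) (Set.Icc x ξ) := by
          apply strictMonoOn_of_deriv_pos (convex_Icc x ξ)
          · exact fun y hy => ((g3_hasDerivAt v hV (hsub hy)).continuousAt).continuousWithinAt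
          · intro y hy
            rw [interior_Icc] at hy
            have hymem : y ∈ Set.Ioo (0:ℝ) 1 := hsub ⟨hy.1.le, hy.2.le⟩
            rw [(g3_hasDerivAt v hV hymem).deriv, hderiv_eq y hymem, sub_pos]
            have hy0 := hymem.1
            have hy1 := hymem.2
            have h1 : 0 < (v:ℝ) - y := by linarith
            have h5 : 0 < (v:ℝ) - 2 + y := by linarith
            have hq : 0 < y ^ 2 - ((v:ℝ) + 1) * y + 1 := by
              have hp := mul_pos (sub_pos.mpr hy.2) (show 0 < ((v:ℝ) + 1 - ξ) - y by linarith)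
              nlinarith [hquad]
            apply Real.log_lt_log
            · exact mul_pos h1 (mul_pos hy0 h5)
            · have := mul_pos (show (0:ℝ) < (v:ℝ) - 1 by linarith) hq
              linarith [hfact y]
        exact (hmono (Set.left_mem_Icc.mpr hlt.le) (Set.right_mem_Icc.mpr hlt.le) hlt).le
      · rw [heq]
      · -- decreasing on [ξ, x]
        have hsub : Set.Icc ξ x ⊆ Set.Ioo (0:ℝ) 1 := fun y hy =>
          ⟨lt_of_lt_of_le hξ0 hy.1, lt_of_le_of_lt hy.2 hx.2⟩
        have hanti : StrictAntiOn (g3 v) (Set.Icc ξ x) := by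
          apply strictAntiOn_of_deriv_neg (convex_Icc ξ x)
          · exact fun y hy => ((g3_hasDerivAt v hV (hsub hy)).continuousAt).continuousWithinAt
          · intro y hy
            rw [interior_Icc] at hy
            have hymem : y ∈ Set.Ioo (0:ℝ) 1 := hsub ⟨hy.1.le, hy.2.le⟩
            rw [(g3_hasDerivAt v hV hymem).deriv, hderiv_eq y hymem, sub_neg]
            have hy0 := hymem.1
            have hy1 := hymem.2
            have h2 : 0 < (v:ℝ) - 1 - y := by linarith
            have h6 : 0 < 1 - y := by linarith
            have hq : y ^ 2 - ((v:ℝ) + 1) * y + 1 < 0 := by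
              have hp := mul_pos (sub_pos.mpr hy.1) (show 0 < ((v:ℝ) + 1 - ξ) - y by linarith)
              nlinarith [hquad]
            apply Real.log_lt_log
            · exact mul_pos h2 (pow_pos h6 2)
            · have := mul_pos (show (0:ℝ) < (v:ℝ) - 1 by linarith) (neg_pos.mpr hq)
              nlinarith [hfact y]
        exact (hanti (Set.left_mem_Icc.mpr hgt.le) (Set.right_mem_Icc.mpr hgt.le) hgt).le
    rw [f3_eq_g3 v hV hx, f3_eq_g3 v hV hξmem]
    exact div_le_div_of_nonneg_right key hlog2.le
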